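/- Let f be a surjective isometry of the 1-Wasserstein space over a countable discrete metric space X. Then there exists a bijection σ : X → X such that f(μ)({x}) = μ({σ⁻¹(x)}) for all x ∈ X and all probability measures μ; i.e., f is the pushforward by σ. In particular, the Wasserstein space over a countable discrete space is isometrically rigid. -/

import Mathlib

open scoped ENNReal

namespace IsomPushAux

variable {X : Type*} [Countable X] [DecidableEq X]

/-- Dirac measure at `x` as a function. -/
noncomputable def d (x : X) : X → ℝ≥0∞ := fun y => if y = x then 1 else 0

lemma d_sum (x : X) : ∑' y, d x y = 1 := by
  simpa [d] using tsum_ite_eq x (fun _ : X => (1 : ℝ≥0∞)) ▸ rfl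

lemma d_inj {a b : X} (h : d a = d b) : a = b := by
  by_contra hab
  have := congrFun h a
  simp [d, hab] at this

/-- overlap of a probability measure with a Dirac on the right -/
lemma overlap_d_right (μ : X → ℝ≥0∞) (hμ : ∑' y, μ y = 1) (x : X) :
    ∑' y, min (μ y) (d x y) = μ x := by
  rw [tsum_eq_single x]
  · have hx : μ x ≤ 1 := hμ ▸ ENNReal.le_tsum x
    simp [d, min_eq_left hx]
  · intro y hy
    simp [d, hy]

lemma overlap_d_left (μ : X → ℝ≥0∞) (hμ : ∑' y, μ y = 1) (x : X) :
    ∑' y, min (d x y) (μ y) = μ x := by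
  simp_rw [min_comm]
  exact overlap_d_right μ hμ x

lemma d_d_overlap {a b : X} (hab : a ≠ b) :
    ∑' y, min (d a y) (d b y) = 0 := by
  refine ENNReal.tsum_eq_zero.mpr fun y => ?_
  rcases eq_or_ne y a with rfl | hya
  · simp [d, hab]
  · simp [d, hya]

/-- If the total mass is 1 and some atom is not the whole mass, there is another atom. -/
lemma exists_other_atom (ρ : X → ℝ≥0∞) (hρ : ∑' y, ρ y = 1) {a : X} (ha : ρ a ≠ 1) :
    ∃ b, b ≠ a ∧ ρ b ≠ 0 := by
  by_contra h
  push_neg at h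
  have : ∑' y, ρ y = ρ a := tsum_eq_single a (fun b hb => h b hb)
  rw [hρ] at this
  exact ha this.symm

lemma exists_atom (ρ : X → ℝ≥0∞) (hρ : ∑' y, ρ y = 1) : ∃ a, ρ a ≠ 0 := by
  by_contra h
  push_neg at h
  rw [ENNReal.tsum_eq_zero.mpr h] at hρ
  exact zero_ne_one hρ

/-- A probability measure with an atom of mass 1 is the Dirac there. -/
lemma eq_d_of_atom_one (ρ : X → ℝ≥0∞) (hρ : ∑' y, ρ y = 1) {a : X} (ha : ρ a = 1) :
    ρ = d a := by
  funext y
  rcases eq_or_ne y a with rfl | hya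
  · simp [d, ha]
  · have hle : ρ y + ρ a ≤ ∑' z, ρ z := by
      have := ENNReal.sum_le_tsum (f := ρ) ({y, a} : Finset X)
      rwa [Finset.sum_pair hya] at this
    rw [hρ, ha] at hle
    have : ρ y ≤ 0 := by
      have h1 : ρ y + 1 ≤ 0 + 1 := by simpa using hle
      exact (ENNReal.add_le_add_iff_right ENNReal.one_ne_top).mp h1
    simp [d, hya, le_antisymm this zero_le]

/-- Main auxiliary lemma: a map preserving total-overlap with a two-sided inverse on the
set of probability measures sends Diracs to Diracs. -/
lemma dirac_to_dirac (f g : (X → ℝ≥0∞) → (X → ℝ≥0∞))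
    (hfP : ∀ μ, (∑' y, μ y = 1) → ∑' y, f μ y = 1)
    (hgP : ∀ μ, (∑' y, μ y = 1) → ∑' y, g μ y = 1)
    (hfg : ∀ μ, (∑' y, μ y = 1) → f (g μ) = μ)
    (hm : ∀ μ ν, (∑' y, μ y = 1) → (∑' y, ν y = 1) →
      ∑' y, min (f μ y) (f ν y) = ∑' y, min (μ y) (ν y)) (x : X) :
    ∃ a, f (d x) = d a := by
  set ρ := f (d x) with hρdef
  have hρ : ∑' y, ρ y = 1 := hfP _ (d_sum x)
  obtain ⟨a, ha⟩ := exists_atom ρ hρ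
  refine ⟨a, ?_⟩
  have ha1 : ρ a = 1 := by
    by_contra ha1
    obtain ⟨b, hba, hb⟩ := exists_other_atom ρ hρ ha1
    set α := g (d a) with hαdef
    set β := g (d b) with hβdef
    have hαP : ∑' y, α y = 1 := hgP _ (d_sum a)
    have hβP : ∑' y, β y = 1 := hgP _ (d_sum b)
    -- overlap of α with d x equals ρ a
    have hαx : α x = ρ a := by
      have h1 := hm α (d x) hαP (d_sum x)
      rw [hfg _ (d_sum a)] at h1
      rw [overlap_d_left ρ hρ a, overlap_d_right α hαP x] at h1
      exact h1.symm
    have hβx : β x = ρ b := by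
      have h1 := hm β (d x) hβP (d_sum x)
      rw [hfg _ (d_sum b)] at h1
      rw [overlap_d_left ρ hρ b, overlap_d_right β hβP x] at h1
      exact h1.symm
    -- but α and β have disjoint supports
    have hdisj : ∑' y, min (α y) (β y) = 0 := by
      have h1 := hm α β hαP hβP
      rw [hfg _ (d_sum a), hfg _ (d_sum b)] at h1
      rw [d_d_overlap (Ne.symm hba)] at h1
      exact h1.symm
    have hmin : min (α x) (β x) = 0 := ENNReal.tsum_eq_zero.mp hdisj x
    rw [hαx, hβx] at hmin
    rcases min_eq_iff.mp hmin with ⟨h, _⟩ | ⟨h, _⟩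
    · exact ha h
    · exact hb h
  exact eq_d_of_atom_one ρ hρ ha1

end IsomPushAux

open IsomPushAux

/-- Every surjective isometry f of the 1-Wasserstein space over a countable
discrete metric space X (|X| ≥ 2) is the pushforward by a bijection σ of X:
f(μ)({x}) = μ({σ⁻¹(x)}). In particular, the space is isometrically rigid. -/
theorem isometry_is_pushforward {X : Type*} [Countable X] [DecidableEq X] [Nontrivial X]
    (f : (X → ℝ≥0∞) → (X → ℝ≥0∞))
    (hbij : Set.BijOn f {μ | ∑' x, μ x = 1} {μ | ∑' x, μ x = 1})
    (hiso : ∀ μ ν : X → ℝ≥0∞, (∑' x, μ x = 1) → (∑' x, ν x = 1) →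
      1 - ∑' x, min (f μ x) (f ν x) = 1 - ∑' x, min (μ x) (ν x)) :
    ∃ σ : Equiv.Perm X, ∀ μ : X → ℝ≥0∞, (∑' x, μ x = 1) →
      ∀ x : X, f μ x = μ (σ.symm x) := by
  classical
  have : Nonempty (X → ℝ≥0∞) := ⟨fun _ => 0⟩
  set P : Set (X → ℝ≥0∞) := {μ | ∑' x, μ x = 1} with hP
  set g : (X → ℝ≥0∞) → (X → ℝ≥0∞) := Function.invFunOn f P with hg
  have hinv : Set.InvOn g f P P := hbij.invOn_invFunOn
  have hgmaps : Set.MapsTo g P P := hbij.surjOn.mapsTo_invFunOn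
  have hfP : ∀ μ, (∑' y, μ y = 1) → ∑' y, f μ y = 1 := fun μ hμ => hbij.mapsTo hμ
  have hgP : ∀ μ, (∑' y, μ y = 1) → ∑' y, g μ y = 1 := fun μ hμ => hgmaps hμ
  have hfg : ∀ μ, (∑' y, μ y = 1) → f (g μ) = μ := fun μ hμ => hinv.2 hμ
  have hgf : ∀ μ, (∑' y, μ y = 1) → g (f μ) = μ := fun μ hμ => hinv.1 hμ
  -- f preserves overlaps
  have hover_le : ∀ μ ν : X → ℝ≥0∞, (∑' y, μ y = 1) →
      (∑' y, min (μ y) (ν y)) ≤ 1 := by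
    intro μ ν hμ
    calc ∑' y, min (μ y) (ν y) ≤ ∑' y, μ y :=
          ENNReal.tsum_le_tsum fun y => min_le_left _ _
      _ = 1 := hμ
  have hm : ∀ μ ν, (∑' y, μ y = 1) → (∑' y, ν y = 1) →
      ∑' y, min (f μ y) (f ν y) = ∑' y, min (μ y) (ν y) := by
    intro μ ν hμ hν
    exact (ENNReal.sub_right_inj ENNReal.one_ne_top
      (hover_le _ _ (hfP μ hμ)) (hover_le _ _ hμ)).mp (hiso μ ν hμ hν)
  have hmg : ∀ μ ν, (∑' y, μ y = 1) → (∑' y, ν y = 1) →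
      ∑' y, min (g μ y) (g ν y) = ∑' y, min (μ y) (ν y) := by
    intro μ ν hμ hν
    have := hm (g μ) (g ν) (hgP μ hμ) (hgP ν hν)
    rw [hfg μ hμ, hfg ν hν] at this
    exact this.symm
  -- f and g send Diracs to Diracs
  have hf_dirac : ∀ x : X, ∃ a, f (d x) = d a :=
    dirac_to_dirac f g hfP hgP hfg hm
  have hg_dirac : ∀ x : X, ∃ a, g (d x) = d a := by
    refine dirac_to_dirac g f hgP hfP hgf hmg
  choose s hs using hf_dirac
  choose t ht using hg_dirac
  have hts : ∀ x, t (s x) = x := by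
    intro x
    apply d_inj
    rw [← ht (s x), ← hs x, hgf _ (d_sum x)]
  have hst : ∀ x, s (t x) = x := by
    intro x
    apply d_inj
    rw [← hs (t x), ← ht x, hfg _ (d_sum x)]
  refine ⟨⟨s, t, hts, hst⟩, ?_⟩
  intro μ hμ x
  have hfμ : ∑' y, f μ y = 1 := hfP μ hμ
  have key := hm μ (d (t x)) hμ (d_sum (t x))
  rw [hs (t x), hst x] at key
  rw [overlap_d_right (f μ) hfμ x, overlap_d_right μ hμ (t x)] at key
  simpa using key
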